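/- For any μ ≠ 0 and Ψ, θ₃ ∈ ℝ, the triple u = (Ψ/(2πr)) e_r + (μ/r) e_θ, p = −|u|²/2, d = cos(−θ+θ₃) e_r + sin(−θ+θ₃) e_θ is a solution of the steady Ericksen–Leslie system on ℝ² ∖ {0}. -/

import Mathlib

open Real MeasureTheory

noncomputable section

abbrev E (n : ℕ) := EuclideanSpace ℝ (Fin n)

/-- Partial derivative in the `i`-th coordinate direction. -/
def pd {n : ℕ} (f : E n → ℝ) (i : Fin n) (x : E n) : ℝ :=
  fderiv ℝ f x (EuclideanSpace.single i 1)

/-- Euclidean Laplacian. -/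
def lap {n : ℕ} (f : E n → ℝ) (x : E n) : ℝ := ∑ i, pd (pd f i) i x

/-- `|∇d|²` for a vector-valued map. -/
def gradSq {n : ℕ} (d : E n → E n) (x : E n) : ℝ :=
  ∑ i, ∑ k, (pd (fun y => d y k) i x) ^ 2

/-- The steady simplified Ericksen–Leslie system on `ℝⁿ \ {0}`:
`-Δu + (u·∇)u + ∇p = -div(∇d ⊙ ∇d)`, `div u = 0`, `Δd + |∇d|² d = (u·∇)d`. -/
def SEL {n : ℕ} (u : E n → E n) (p : E n → ℝ) (d : E n → E n) : Prop :=
  ∀ x : E n, x ≠ 0 →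
    (∀ i, -(lap (fun y => u y i) x) + (∑ j, u x j * pd (fun y => u y i) j x) + pd p i x
        = -(∑ j, pd (fun y => ∑ k, pd (fun z => d z k) i y * pd (fun z => d z k) j y) j x))
    ∧ (∑ i, pd (fun y => u y i) i x) = 0
    ∧ (∀ k, lap (fun y => d y k) x + gradSq d x * d x k
        = ∑ i, u x i * pd (fun y => d y k) i x)

/-- The radial unit vector `e_r = (cos θ, sin θ)`. -/
def er (x : E 2) : E 2 := ‖x‖⁻¹ • x

/-- The angular unit vector `e_θ = (-sin θ, cos θ)`. -/
def eth (x : E 2) : E 2 := ‖x‖⁻¹ • (WithLp.equiv 2 (Fin 2 → ℝ)).symm ![-(x 1), x 0]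

/-- The polar angle `θ` of a point of `ℝ²`. -/
def ang (x : E 2) : ℝ := Complex.arg ⟨x 0, x 1⟩

/-! ### Auxiliary lemmas -/

noncomputable def PJ (i : Fin 2) : E 2 →L[ℝ] ℝ := EuclideanSpace.proj i
noncomputable def lin (α β : ℝ) : E 2 →L[ℝ] ℝ := α • PJ 0 + β • PJ 1

lemma lin_apply (α β : ℝ) (v : E 2) : lin α β v = α * v 0 + β * v 1 := by
  simp [lin, PJ]

lemma lin_single0 (α β : ℝ) : lin α β (EuclideanSpace.single (0 : Fin 2) 1) = α := by
  rw [lin_apply]; simp [EuclideanSpace.single_apply]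

lemma lin_single1 (α β : ℝ) : lin α β (EuclideanSpace.single (1 : Fin 2) 1) = β := by
  rw [lin_apply]; simp [EuclideanSpace.single_apply]

lemma hasFDerivAt_quad (t0 t1 t2 t3 t4 t5 : ℝ) (x : E 2) :
    HasFDerivAt (fun y : E 2 => t0 + t1 * y 0 + t2 * y 1 + t3 * (y 0 * y 0) + t4 * (y 0 * y 1) + t5 * (y 1 * y 1))
      (lin (t1 + 2*t3*(x 0) + t4*(x 1)) (t2 + t4*(x 0) + 2*t5*(x 1))) x := by
  have h0 : HasFDerivAt (fun y : E 2 => y 0) (PJ 0) x := (PJ 0).hasFDerivAt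
  have h1 : HasFDerivAt (fun y : E 2 => y 1) (PJ 1) x := (PJ 1).hasFDerivAt
  have H := (((((hasFDerivAt_const t0 x).add (h0.const_mul t1)).add (h1.const_mul t2)).add
      ((h0.mul h0).const_mul t3)).add ((h0.mul h1).const_mul t4)).add ((h1.mul h1).const_mul t5)
  refine H.congr_fderiv ?_
  apply ContinuousLinearMap.ext
  intro v
  simp only [ContinuousLinearMap.add_apply, ContinuousLinearMap.smul_apply, smul_eq_mul,
    ContinuousLinearMap.zero_apply, lin_apply]
  simp [PJ]
  ring

lemma hasFDerivAt_quad' {f : E 2 → ℝ} (t0 t1 t2 t3 t4 t5 : ℝ) (x : E 2)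
    (hf : ∀ y : E 2, f y = t0 + t1 * y 0 + t2 * y 1 + t3 * (y 0 * y 0) + t4 * (y 0 * y 1) + t5 * (y 1 * y 1)) :
    HasFDerivAt f (lin (t1 + 2*t3*(x 0) + t4*(x 1)) (t2 + t4*(x 0) + 2*t5*(x 1))) x := by
  have : f = fun y : E 2 => t0 + t1 * y 0 + t2 * y 1 + t3 * (y 0 * y 0) + t4 * (y 0 * y 1) + t5 * (y 1 * y 1) :=
    funext hf
  rw [this]; exact hasFDerivAt_quad t0 t1 t2 t3 t4 t5 x

lemma pd_ratio {num den : E 2 → ℝ} {num' den' : E 2 →L[ℝ] ℝ} {x : E 2}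
    (hn : HasFDerivAt num num' x) (hd : HasFDerivAt den den' x) (h0 : den x ≠ 0) (i : Fin 2) :
    pd (fun y => num y / den y) i x =
      (num' (EuclideanSpace.single i 1) * den x - num x * den' (EuclideanSpace.single i 1)) / den x ^ 2 := by
  have hinv := (hasFDerivAt_inv' (𝕜 := ℝ) h0).comp x hd
  have hinv2 : HasFDerivAt (fun y => (den y)⁻¹)
      ((-((ContinuousLinearMap.mulLeftRight ℝ ℝ) (den x)⁻¹) (den x)⁻¹).comp den') x := hinv
  have h : HasFDerivAt (fun y => num y * (den y)⁻¹) _ x := hn.mul hinv2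
  have he : (fun y => num y / den y) = fun y => num y * (den y)⁻¹ := by
    funext y; rw [div_eq_mul_inv]
  rw [pd, he, h.fderiv]
  simp only [ContinuousLinearMap.add_apply, ContinuousLinearMap.smul_apply,
    ContinuousLinearMap.comp_apply, ContinuousLinearMap.neg_apply,
    ContinuousLinearMap.mulLeftRight_apply, smul_eq_mul]
  field_simp
  ring

lemma pd_congr {f g : E 2 → ℝ} {x : E 2} (h : f =ᶠ[nhds x] g) (i : Fin 2) :
    pd f i x = pd g i x := by
  unfold pd; rw [h.fderiv_eq]

lemma pd_const (C : ℝ) (i : Fin 2) (x : E 2) : pd (fun _ => C) i x = 0 := by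
  unfold pd; rw [fderiv_fun_const]; simp

/-! ### Coordinate computations -/

lemma norm_sq_E2 (y : E 2) : ‖y‖^2 = (y 0)^2 + (y 1)^2 := by
  rw [EuclideanSpace.norm_eq, Real.sq_sqrt (by positivity)]
  simp [Fin.sum_univ_two, sq_abs]

lemma ne_zero_coord {y : E 2} (hy : y ≠ 0) : (y 0)^2 + (y 1)^2 ≠ 0 := by
  rw [← norm_sq_E2]
  simpa using hy

lemma er_apply0 (y : E 2) : er y 0 = ‖y‖⁻¹ * y 0 := by simp [er]
lemma er_apply1 (y : E 2) : er y 1 = ‖y‖⁻¹ * y 1 := by simp [er]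
lemma eth_apply0 (y : E 2) : eth y 0 = ‖y‖⁻¹ * (-(y 1)) := by simp [eth]
lemma eth_apply1 (y : E 2) : eth y 1 = ‖y‖⁻¹ * y 0 := by simp [eth]

/-- Cartesian model of the velocity, first component. -/
def U0 (Ψ μ : ℝ) : E 2 → ℝ := fun y => (Ψ/(2*π) * y 0 - μ * y 1) / ((y 0)^2 + (y 1)^2)
/-- Cartesian model of the velocity, second component. -/
def U1 (Ψ μ : ℝ) : E 2 → ℝ := fun y => (Ψ/(2*π) * y 1 + μ * y 0) / ((y 0)^2 + (y 1)^2)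
/-- Cartesian model of the pressure. -/
def PF (Ψ μ : ℝ) : E 2 → ℝ := fun y => (-((Ψ/(2*π))^2 + μ^2)/2) / ((y 0)^2 + (y 1)^2)
/-- `∂₀ U0`. -/
def G0 (Ψ μ : ℝ) : E 2 → ℝ := fun y =>
  (Ψ/(2*π)*((y 1)^2-(y 0)^2) + 2*μ*(y 0*y 1)) / (((y 0)^2+(y 1)^2) * ((y 0)^2+(y 1)^2))
/-- `∂₁ U0 = ∂₀ U1`. -/
def G1 (Ψ μ : ℝ) : E 2 → ℝ := fun y =>
  (μ*((y 1)^2-(y 0)^2) - 2*(Ψ/(2*π))*(y 0*y 1)) / (((y 0)^2+(y 1)^2) * ((y 0)^2+(y 1)^2))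
/-- `∂₁ U1`. -/
def G2 (Ψ μ : ℝ) : E 2 → ℝ := fun y =>
  (Ψ/(2*π)*((y 0)^2-(y 1)^2) - 2*μ*(y 0*y 1)) / (((y 0)^2+(y 1)^2) * ((y 0)^2+(y 1)^2))

lemma uEq0 (Ψ μ : ℝ) {y : E 2} (hy : y ≠ 0) :
    ((Ψ / (2 * π * ‖y‖)) • er y + (μ / ‖y‖) • eth y) 0 = U0 Ψ μ y := by
  have hn : ‖y‖ ≠ 0 := by simpa using hy
  have h2 := norm_sq_E2 y
  simp only [U0, PiLp.add_apply, PiLp.smul_apply, smul_eq_mul, er_apply0, eth_apply0]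
  rw [← h2]
  have := Real.pi_ne_zero
  field_simp
  ring

lemma uEq1 (Ψ μ : ℝ) {y : E 2} (hy : y ≠ 0) :
    ((Ψ / (2 * π * ‖y‖)) • er y + (μ / ‖y‖) • eth y) 1 = U1 Ψ μ y := by
  have hn : ‖y‖ ≠ 0 := by simpa using hy
  have h2 := norm_sq_E2 y
  simp only [U1, PiLp.add_apply, PiLp.smul_apply, smul_eq_mul, er_apply1, eth_apply1]
  rw [← h2]
  have := Real.pi_ne_zero
  field_simp

lemma pEq (Ψ μ : ℝ) {y : E 2} (hy : y ≠ 0) :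
    -‖(Ψ / (2 * π * ‖y‖)) • er y + (μ / ‖y‖) • eth y‖ ^ 2 / 2 = PF Ψ μ y := by
  have hQ := ne_zero_coord hy
  rw [norm_sq_E2 ((Ψ / (2 * π * ‖y‖)) • er y + (μ / ‖y‖) • eth y), uEq0 Ψ μ hy, uEq1 Ψ μ hy]
  simp only [U0, U1, PF]
  field_simp
  ring

lemma abs_eq_norm {y : E 2} : ‖(⟨y 0, y 1⟩ : ℂ)‖ = ‖y‖ := by
  rw [EuclideanSpace.norm_eq, Complex.norm_def, Complex.normSq_apply]
  simp [Fin.sum_univ_two, sq_abs]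
  ring_nf

lemma complex_ne {y : E 2} (hy : y ≠ 0) : (⟨y 0, y 1⟩ : ℂ) ≠ 0 := by
  intro h
  apply hy
  have h0 : y 0 = 0 := congrArg Complex.re h
  have h1 : y 1 = 0 := congrArg Complex.im h
  ext i
  fin_cases i <;> simpa

lemma cos_ang {y : E 2} (hy : y ≠ 0) : Real.cos (ang y) = y 0 / ‖y‖ := by
  rw [ang, Complex.cos_arg (complex_ne hy), abs_eq_norm]

lemma sin_ang {y : E 2} : Real.sin (ang y) = y 1 / ‖y‖ := by
  rw [ang, Complex.sin_arg, abs_eq_norm]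

lemma dEq0 (θ₃ : ℝ) {y : E 2} (hy : y ≠ 0) :
    (Real.cos (-(ang y) + θ₃) • er y + Real.sin (-(ang y) + θ₃) • eth y) 0 = Real.cos θ₃ := by
  have hn : ‖y‖ ≠ 0 := by simpa using hy
  have h2 := norm_sq_E2 y
  simp only [PiLp.add_apply, PiLp.smul_apply, smul_eq_mul, er_apply0, eth_apply0,
    Real.cos_add, Real.sin_add, Real.cos_neg, Real.sin_neg, cos_ang hy, sin_ang]
  field_simp
  linear_combination (-Real.cos θ₃) * h2

lemma dEq1 (θ₃ : ℝ) {y : E 2} (hy : y ≠ 0) :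
    (Real.cos (-(ang y) + θ₃) • er y + Real.sin (-(ang y) + θ₃) • eth y) 1 = Real.sin θ₃ := by
  have hn : ‖y‖ ≠ 0 := by simpa using hy
  have h2 := norm_sq_E2 y
  simp only [PiLp.add_apply, PiLp.smul_apply, smul_eq_mul, er_apply1, eth_apply1,
    Real.cos_add, Real.sin_add, Real.cos_neg, Real.sin_neg, cos_ang hy, sin_ang]
  field_simp
  linear_combination (-Real.sin θ₃) * h2

/-! ### Derivatives of the models -/

lemma pd_U0_0 (Ψ μ : ℝ) {y : E 2} (hy : y ≠ 0) : pd (U0 Ψ μ) 0 y = G0 Ψ μ y := by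
  have hQ := ne_zero_coord hy
  have hn : HasFDerivAt (fun y : E 2 => Ψ/(2*π) * y 0 - μ * y 1)
      (lin (Ψ/(2*π) + 2*0*(y 0) + 0*(y 1)) (-μ + 0*(y 0) + 2*0*(y 1))) y :=
    hasFDerivAt_quad' 0 (Ψ/(2*π)) (-μ) 0 0 0 y (by intro z; ring)
  have hd : HasFDerivAt (fun y : E 2 => (y 0)^2 + (y 1)^2)
      (lin (0 + 2*1*(y 0) + 0*(y 1)) (0 + 0*(y 0) + 2*1*(y 1))) y :=
    hasFDerivAt_quad' 0 0 0 1 0 1 y (by intro z; ring)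
  unfold U0 G0
  rw [pd_ratio hn hd hQ]
  rw [lin_single0, lin_single0]
  rw [div_eq_div_iff (by positivity) (by positivity)]
  ring

lemma pd_U0_1 (Ψ μ : ℝ) {y : E 2} (hy : y ≠ 0) : pd (U0 Ψ μ) 1 y = G1 Ψ μ y := by
  have hQ := ne_zero_coord hy
  have hn : HasFDerivAt (fun y : E 2 => Ψ/(2*π) * y 0 - μ * y 1)
      (lin (Ψ/(2*π) + 2*0*(y 0) + 0*(y 1)) (-μ + 0*(y 0) + 2*0*(y 1))) y :=
    hasFDerivAt_quad' 0 (Ψ/(2*π)) (-μ) 0 0 0 y (by intro z; ring)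
  have hd : HasFDerivAt (fun y : E 2 => (y 0)^2 + (y 1)^2)
      (lin (0 + 2*1*(y 0) + 0*(y 1)) (0 + 0*(y 0) + 2*1*(y 1))) y :=
    hasFDerivAt_quad' 0 0 0 1 0 1 y (by intro z; ring)
  unfold U0 G1
  rw [pd_ratio hn hd hQ]
  rw [lin_single1, lin_single1]
  rw [div_eq_div_iff (by positivity) (by positivity)]
  ring

lemma pd_U1_0 (Ψ μ : ℝ) {y : E 2} (hy : y ≠ 0) : pd (U1 Ψ μ) 0 y = G1 Ψ μ y := by
  have hQ := ne_zero_coord hy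
  have hn : HasFDerivAt (fun y : E 2 => Ψ/(2*π) * y 1 + μ * y 0)
      (lin (μ + 2*0*(y 0) + 0*(y 1)) (Ψ/(2*π) + 0*(y 0) + 2*0*(y 1))) y :=
    hasFDerivAt_quad' 0 μ (Ψ/(2*π)) 0 0 0 y (by intro z; ring)
  have hd : HasFDerivAt (fun y : E 2 => (y 0)^2 + (y 1)^2)
      (lin (0 + 2*1*(y 0) + 0*(y 1)) (0 + 0*(y 0) + 2*1*(y 1))) y :=
    hasFDerivAt_quad' 0 0 0 1 0 1 y (by intro z; ring)
  unfold U1 G1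
  rw [pd_ratio hn hd hQ]
  rw [lin_single0, lin_single0]
  rw [div_eq_div_iff (by positivity) (by positivity)]
  ring

lemma pd_U1_1 (Ψ μ : ℝ) {y : E 2} (hy : y ≠ 0) : pd (U1 Ψ μ) 1 y = G2 Ψ μ y := by
  have hQ := ne_zero_coord hy
  have hn : HasFDerivAt (fun y : E 2 => Ψ/(2*π) * y 1 + μ * y 0)
      (lin (μ + 2*0*(y 0) + 0*(y 1)) (Ψ/(2*π) + 0*(y 0) + 2*0*(y 1))) y :=
    hasFDerivAt_quad' 0 μ (Ψ/(2*π)) 0 0 0 y (by intro z; ring)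
  have hd : HasFDerivAt (fun y : E 2 => (y 0)^2 + (y 1)^2)
      (lin (0 + 2*1*(y 0) + 0*(y 1)) (0 + 0*(y 0) + 2*1*(y 1))) y :=
    hasFDerivAt_quad' 0 0 0 1 0 1 y (by intro z; ring)
  unfold U1 G2
  rw [pd_ratio hn hd hQ]
  rw [lin_single1, lin_single1]
  rw [div_eq_div_iff (by positivity) (by positivity)]
  ring

lemma pd_PF_0 (Ψ μ : ℝ) {y : E 2} (hy : y ≠ 0) : pd (PF Ψ μ) 0 y =
    ((Ψ/(2*π))^2 + μ^2) * y 0 / (((y 0)^2+(y 1)^2) * ((y 0)^2+(y 1)^2)) := by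
  have hQ := ne_zero_coord hy
  have hn : HasFDerivAt (fun _ : E 2 => (-((Ψ/(2*π))^2 + μ^2)/2))
      (lin (0 + 2*0*(y 0) + 0*(y 1)) (0 + 0*(y 0) + 2*0*(y 1))) y :=
    hasFDerivAt_quad' (-((Ψ/(2*π))^2 + μ^2)/2) 0 0 0 0 0 y (by intro z; ring)
  have hd : HasFDerivAt (fun y : E 2 => (y 0)^2 + (y 1)^2)
      (lin (0 + 2*1*(y 0) + 0*(y 1)) (0 + 0*(y 0) + 2*1*(y 1))) y :=
    hasFDerivAt_quad' 0 0 0 1 0 1 y (by intro z; ring)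
  unfold PF
  rw [pd_ratio hn hd hQ]
  rw [lin_single0, lin_single0]
  rw [div_eq_div_iff (by positivity) (by positivity)]
  ring

lemma pd_PF_1 (Ψ μ : ℝ) {y : E 2} (hy : y ≠ 0) : pd (PF Ψ μ) 1 y =
    ((Ψ/(2*π))^2 + μ^2) * y 1 / (((y 0)^2+(y 1)^2) * ((y 0)^2+(y 1)^2)) := by
  have hQ := ne_zero_coord hy
  have hn : HasFDerivAt (fun _ : E 2 => (-((Ψ/(2*π))^2 + μ^2)/2))
      (lin (0 + 2*0*(y 0) + 0*(y 1)) (0 + 0*(y 0) + 2*0*(y 1))) y :=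
    hasFDerivAt_quad' (-((Ψ/(2*π))^2 + μ^2)/2) 0 0 0 0 0 y (by intro z; ring)
  have hd : HasFDerivAt (fun y : E 2 => (y 0)^2 + (y 1)^2)
      (lin (0 + 2*1*(y 0) + 0*(y 1)) (0 + 0*(y 0) + 2*1*(y 1))) y :=
    hasFDerivAt_quad' 0 0 0 1 0 1 y (by intro z; ring)
  unfold PF
  rw [pd_ratio hn hd hQ]
  rw [lin_single1, lin_single1]
  rw [div_eq_div_iff (by positivity) (by positivity)]
  ring

lemma lap_row0 (Ψ μ : ℝ) {y : E 2} (hy : y ≠ 0) :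
    pd (G0 Ψ μ) 0 y + pd (G1 Ψ μ) 1 y = 0 := by
  have hQ := ne_zero_coord hy
  have hQQ : ((y 0)^2+(y 1)^2) * ((y 0)^2+(y 1)^2) ≠ 0 := mul_ne_zero hQ hQ
  have hd : HasFDerivAt (fun y : E 2 => (y 0)^2 + (y 1)^2)
      (lin (0 + 2*1*(y 0) + 0*(y 1)) (0 + 0*(y 0) + 2*1*(y 1))) y :=
    hasFDerivAt_quad' 0 0 0 1 0 1 y (by intro z; ring)
  have hdd : HasFDerivAt (fun y : E 2 => ((y 0)^2 + (y 1)^2) * ((y 0)^2 + (y 1)^2)) _ y := hd.mul hd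
  have hn0 : HasFDerivAt (fun y : E 2 => Ψ/(2*π)*((y 1)^2-(y 0)^2) + 2*μ*(y 0*y 1))
      (lin (0 + 2*(-(Ψ/(2*π)))*(y 0) + (2*μ)*(y 1)) (0 + (2*μ)*(y 0) + 2*(Ψ/(2*π))*(y 1))) y :=
    hasFDerivAt_quad' 0 0 0 (-(Ψ/(2*π))) (2*μ) (Ψ/(2*π)) y (by intro z; ring)
  have hn1 : HasFDerivAt (fun y : E 2 => μ*((y 1)^2-(y 0)^2) - 2*(Ψ/(2*π))*(y 0*y 1))
      (lin (0 + 2*(-μ)*(y 0) + (-(2*(Ψ/(2*π))))*(y 1)) (0 + (-(2*(Ψ/(2*π))))*(y 0) + 2*μ*(y 1))) y :=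
    hasFDerivAt_quad' 0 0 0 (-μ) (-(2*(Ψ/(2*π)))) μ y (by intro z; ring)
  unfold G0 G1
  rw [pd_ratio hn0 hdd hQQ, pd_ratio hn1 hdd hQQ]
  simp only [ContinuousLinearMap.add_apply, ContinuousLinearMap.smul_apply, smul_eq_mul,
    lin_single0, lin_single1]
  rw [← add_div, div_eq_zero_iff]
  left; ring

lemma lap_row1 (Ψ μ : ℝ) {y : E 2} (hy : y ≠ 0) :
    pd (G1 Ψ μ) 0 y + pd (G2 Ψ μ) 1 y = 0 := by
  have hQ := ne_zero_coord hy
  have hQQ : ((y 0)^2+(y 1)^2) * ((y 0)^2+(y 1)^2) ≠ 0 := mul_ne_zero hQ hQ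
  have hd : HasFDerivAt (fun y : E 2 => (y 0)^2 + (y 1)^2)
      (lin (0 + 2*1*(y 0) + 0*(y 1)) (0 + 0*(y 0) + 2*1*(y 1))) y :=
    hasFDerivAt_quad' 0 0 0 1 0 1 y (by intro z; ring)
  have hdd : HasFDerivAt (fun y : E 2 => ((y 0)^2 + (y 1)^2) * ((y 0)^2 + (y 1)^2)) _ y := hd.mul hd
  have hn1 : HasFDerivAt (fun y : E 2 => μ*((y 1)^2-(y 0)^2) - 2*(Ψ/(2*π))*(y 0*y 1))
      (lin (0 + 2*(-μ)*(y 0) + (-(2*(Ψ/(2*π))))*(y 1)) (0 + (-(2*(Ψ/(2*π))))*(y 0) + 2*μ*(y 1))) y :=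
    hasFDerivAt_quad' 0 0 0 (-μ) (-(2*(Ψ/(2*π)))) μ y (by intro z; ring)
  have hn2 : HasFDerivAt (fun y : E 2 => Ψ/(2*π)*((y 0)^2-(y 1)^2) - 2*μ*(y 0*y 1))
      (lin (0 + 2*(Ψ/(2*π))*(y 0) + (-(2*μ))*(y 1)) (0 + (-(2*μ))*(y 0) + 2*(-(Ψ/(2*π)))*(y 1))) y :=
    hasFDerivAt_quad' 0 0 0 (Ψ/(2*π)) (-(2*μ)) (-(Ψ/(2*π))) y (by intro z; ring)
  unfold G1 G2
  rw [pd_ratio hn1 hdd hQQ, pd_ratio hn2 hdd hQQ]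
  simp only [ContinuousLinearMap.add_apply, ContinuousLinearMap.smul_apply, smul_eq_mul,
    lin_single0, lin_single1]
  rw [← add_div, div_eq_zero_iff]
  left; ring

lemma mom0 (Ψ μ : ℝ) {y : E 2} (hy : y ≠ 0) :
    U0 Ψ μ y * G0 Ψ μ y + U1 Ψ μ y * G1 Ψ μ y
      + ((Ψ/(2*π))^2 + μ^2) * y 0 / (((y 0)^2+(y 1)^2) * ((y 0)^2+(y 1)^2)) = 0 := by
  have hQ := ne_zero_coord hy
  unfold U0 U1 G0 G1
  field_simp
  ring

lemma mom1 (Ψ μ : ℝ) {y : E 2} (hy : y ≠ 0) :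
    U0 Ψ μ y * G1 Ψ μ y + U1 Ψ μ y * G2 Ψ μ y
      + ((Ψ/(2*π))^2 + μ^2) * y 1 / (((y 0)^2+(y 1)^2) * ((y 0)^2+(y 1)^2)) = 0 := by
  have hQ := ne_zero_coord hy
  unfold U0 U1 G1 G2
  field_simp
  ring

lemma div_row (Ψ μ : ℝ) {y : E 2} (hy : y ≠ 0) : G0 Ψ μ y + G2 Ψ μ y = 0 := by
  unfold G0 G2
  rw [← add_div, div_eq_zero_iff]
  left; ring

theorem stmt1 (μ Ψ θ₃ : ℝ) (hμ : μ ≠ 0) :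
    SEL (fun x => (Ψ / (2 * π * ‖x‖)) • er x + (μ / ‖x‖) • eth x)
      (fun x => -‖(Ψ / (2 * π * ‖x‖)) • er x + (μ / ‖x‖) • eth x‖ ^ 2 / 2)
      (fun x => Real.cos (-(ang x) + θ₃) • er x + Real.sin (-(ang x) + θ₃) • eth x) := by
  intro x hx
  have hxQ := ne_zero_coord hx
  have hne : ∀ᶠ y in nhds x, y ≠ 0 := eventually_ne_nhds hx
  have hu0 : (fun y : E 2 => ((Ψ / (2 * π * ‖y‖)) • er y + (μ / ‖y‖) • eth y) 0) =ᶠ[nhds x] U0 Ψ μ :=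
    hne.mono fun y hy => uEq0 Ψ μ hy
  have hu1 : (fun y : E 2 => ((Ψ / (2 * π * ‖y‖)) • er y + (μ / ‖y‖) • eth y) 1) =ᶠ[nhds x] U1 Ψ μ :=
    hne.mono fun y hy => uEq1 Ψ μ hy
  have hp : (fun y : E 2 => -‖(Ψ / (2 * π * ‖y‖)) • er y + (μ / ‖y‖) • eth y‖ ^ 2 / 2) =ᶠ[nhds x] PF Ψ μ :=
    hne.mono fun y hy => pEq Ψ μ hy
  have pdd : ∀ (k i : Fin 2) (y : E 2), y ≠ 0 →
      pd (fun z : E 2 => (Real.cos (-(ang z) + θ₃) • er z + Real.sin (-(ang z) + θ₃) • eth z) k) i y = 0 := by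
    intro k i y hy
    have hev : (fun z : E 2 => (Real.cos (-(ang z) + θ₃) • er z + Real.sin (-(ang z) + θ₃) • eth z) k)
        =ᶠ[nhds y] (fun _ => if k = 0 then Real.cos θ₃ else Real.sin θ₃) :=
      (eventually_ne_nhds hy).mono fun z hz => by
        fin_cases k
        · simpa using dEq0 θ₃ hz
        · simpa using dEq1 θ₃ hz
    rw [pd_congr hev, pd_const]
  -- first derivative values of the velocity components at x
  have h00 : pd (fun y : E 2 => ((Ψ / (2 * π * ‖y‖)) • er y + (μ / ‖y‖) • eth y) 0) 0 x = G0 Ψ μ x :=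
    (pd_congr hu0 0).trans (pd_U0_0 Ψ μ hx)
  have h01 : pd (fun y : E 2 => ((Ψ / (2 * π * ‖y‖)) • er y + (μ / ‖y‖) • eth y) 0) 1 x = G1 Ψ μ x :=
    (pd_congr hu0 1).trans (pd_U0_1 Ψ μ hx)
  have h10 : pd (fun y : E 2 => ((Ψ / (2 * π * ‖y‖)) • er y + (μ / ‖y‖) • eth y) 1) 0 x = G1 Ψ μ x :=
    (pd_congr hu1 0).trans (pd_U1_0 Ψ μ hx)
  have h11 : pd (fun y : E 2 => ((Ψ / (2 * π * ‖y‖)) • er y + (μ / ‖y‖) • eth y) 1) 1 x = G2 Ψ μ x :=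
    (pd_congr hu1 1).trans (pd_U1_1 Ψ μ hx)
  -- second derivative reductions
  have e00 : (fun y : E 2 => pd (fun z : E 2 => ((Ψ / (2 * π * ‖z‖)) • er z + (μ / ‖z‖) • eth z) 0) 0 y)
      =ᶠ[nhds x] G0 Ψ μ :=
    hne.mono fun y hy =>
      (pd_congr ((eventually_ne_nhds hy).mono fun z hz => uEq0 Ψ μ hz) 0).trans (pd_U0_0 Ψ μ hy)
  have e01 : (fun y : E 2 => pd (fun z : E 2 => ((Ψ / (2 * π * ‖z‖)) • er z + (μ / ‖z‖) • eth z) 0) 1 y)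
      =ᶠ[nhds x] G1 Ψ μ :=
    hne.mono fun y hy =>
      (pd_congr ((eventually_ne_nhds hy).mono fun z hz => uEq0 Ψ μ hz) 1).trans (pd_U0_1 Ψ μ hy)
  have e10 : (fun y : E 2 => pd (fun z : E 2 => ((Ψ / (2 * π * ‖z‖)) • er z + (μ / ‖z‖) • eth z) 1) 0 y)
      =ᶠ[nhds x] G1 Ψ μ :=
    hne.mono fun y hy =>
      (pd_congr ((eventually_ne_nhds hy).mono fun z hz => uEq1 Ψ μ hz) 0).trans (pd_U1_0 Ψ μ hy)
  have e11 : (fun y : E 2 => pd (fun z : E 2 => ((Ψ / (2 * π * ‖z‖)) • er z + (μ / ‖z‖) • eth z) 1) 1 y)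
      =ᶠ[nhds x] G2 Ψ μ :=
    hne.mono fun y hy =>
      (pd_congr ((eventually_ne_nhds hy).mono fun z hz => uEq1 Ψ μ hz) 1).trans (pd_U1_1 Ψ μ hy)
  refine ⟨?_, ?_, ?_⟩
  · intro i
    have hstress : ∀ j : Fin 2,
        pd (fun y : E 2 =>
          pd (fun z : E 2 => (Real.cos (-(ang z) + θ₃) • er z + Real.sin (-(ang z) + θ₃) • eth z) 0) i y *
          pd (fun z : E 2 => (Real.cos (-(ang z) + θ₃) • er z + Real.sin (-(ang z) + θ₃) • eth z) 0) j y +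
          pd (fun z : E 2 => (Real.cos (-(ang z) + θ₃) • er z + Real.sin (-(ang z) + θ₃) • eth z) 1) i y *
          pd (fun z : E 2 => (Real.cos (-(ang z) + θ₃) • er z + Real.sin (-(ang z) + θ₃) • eth z) 1) j y) j x
          = 0 := by
      intro j
      have hev : (fun y : E 2 =>
          pd (fun z : E 2 => (Real.cos (-(ang z) + θ₃) • er z + Real.sin (-(ang z) + θ₃) • eth z) 0) i y *
          pd (fun z : E 2 => (Real.cos (-(ang z) + θ₃) • er z + Real.sin (-(ang z) + θ₃) • eth z) 0) j y +
          pd (fun z : E 2 => (Real.cos (-(ang z) + θ₃) • er z + Real.sin (-(ang z) + θ₃) • eth z) 1) i y *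
          pd (fun z : E 2 => (Real.cos (-(ang z) + θ₃) • er z + Real.sin (-(ang z) + θ₃) • eth z) 1) j y)
          =ᶠ[nhds x] (fun _ => (0:ℝ)) :=
        hne.mono fun y hy => by
          beta_reduce
          rw [pdd 0 i y hy, pdd 1 i y hy, zero_mul, zero_mul, add_zero]
      rw [pd_congr hev, pd_const]
    have hi : i = 0 ∨ i = 1 := by omega
    simp only [lap, Fin.sum_univ_two]
    rcases hi with rfl | rfl
    · rw [pd_congr e00 0, pd_congr e01 1, h00, h01, uEq0 Ψ μ hx, uEq1 Ψ μ hx,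
        (pd_congr hp 0).trans (pd_PF_0 Ψ μ hx), hstress 0, hstress 1]
      linarith [lap_row0 Ψ μ hx, mom0 Ψ μ hx]
    · rw [pd_congr e10 0, pd_congr e11 1, h10, h11, uEq0 Ψ μ hx, uEq1 Ψ μ hx,
        (pd_congr hp 1).trans (pd_PF_1 Ψ μ hx), hstress 0, hstress 1]
      linarith [lap_row1 Ψ μ hx, mom1 Ψ μ hx]
  · simp only [Fin.sum_univ_two]
    rw [h00, h11]
    exact div_row Ψ μ hx
  · intro k
    simp only [lap, gradSq, Fin.sum_univ_two]
    rw [pd_congr (hne.mono fun y hy => pdd k 0 y hy) 0, pd_congr (hne.mono fun y hy => pdd k 1 y hy) 1,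
      pd_const, pd_const, pdd 0 0 x hx, pdd 0 1 x hx, pdd 1 0 x hx, pdd 1 1 x hx,
      pdd k 0 x hx, pdd k 1 x hx]
    norm_num

end
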